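/- Let R be a unital alternative ring with nontrivial idempotent e₁ and e₂ = 1 − e₁, k-torsion free for every k ∈ {2, 3, n−1, n−3} with k ≥ 1, satisfying conditions (1), (2), (3) and (4), and let D : R → R be a multiplicative Lie n-derivation (n ≥ 2) satisfying conditions (a), (b), (c) and with D(e₁) ∈ Z(R). Then for i ≠ j in {1,2}, for all a ∈ R_ii, b ∈ R_ij and any c ∈ R_ii with D(a) − c ∈ Z(R), one has D(a*b) = c*b + a*D(b). -/
import Mathlib


/-- The commutative center of a (possibly non-associative, non-unital) ring. -/
def rctr (R : Type*) [NonUnitalNonAssocRing R] : Set R := {z | ∀ x, z * x = x * z}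

/-- `R` is an alternative ring. -/
def IsAlt (R : Type*) [NonUnitalNonAssocRing R] : Prop :=
  ∀ x y : R, (x * x) * y = x * (x * y) ∧ (y * x) * x = y * (x * x)

/-- Peirce components relative to an idempotent `e`. -/
def P11 {R : Type*} [NonUnitalNonAssocRing R] (e : R) : Set R := {x | e * x = x ∧ x * e = x}
def P12 {R : Type*} [NonUnitalNonAssocRing R] (e : R) : Set R := {x | e * x = x ∧ x * e = 0}
def P21 {R : Type*} [NonUnitalNonAssocRing R] (e : R) : Set R := {x | e * x = 0 ∧ x * e = x}
def P22 {R : Type*} [NonUnitalNonAssocRing R] (e : R) : Set R := {x | e * x = 0 ∧ x * e = 0}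

/-- The iterated commutator `p_n`: `p_1(x) = x`,
`p_n(x_1,…,x_n) = [p_{n-1}(x_1,…,x_{n-1}), x_n]`. -/
def pn {R : Type*} [NonUnitalNonAssocRing R] : (n : ℕ) → (Fin n → R) → R
  | 0, _ => 0
  | 1, x => x 0
  | (m+2), x =>
      pn (m+1) (fun i => x i.castSucc) * x (Fin.last (m+1))
        - x (Fin.last (m+1)) * pn (m+1) (fun i => x i.castSucc)

/-- A (not necessarily additive) map `D` is a multiplicative Lie `n`-derivation. -/
def IsMultLieNDeriv {R : Type*} [NonUnitalNonAssocRing R] (n : ℕ) (D : R → R) : Prop :=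
  ∀ x : Fin n → R, D (pn n x) = ∑ i : Fin n, pn n (Function.update x i (D (x i)))


section Aux

variable {R : Type*} [NonAssocRing R]

lemma alt_skew12 (halt : IsAlt R) (x y z : R) :
    x*y*z - x*(y*z) = -(y*x*z - y*(x*z)) := by
  have h1 := (halt (x+y) z).1
  have h2 := (halt x z).1
  have h3 := (halt y z).1
  simp only [add_mul, mul_add] at h1
  linear_combination (norm := abel) h1 - h2 - h3

lemma alt_skew23 (halt : IsAlt R) (x y z : R) :
    x*y*z - x*(y*z) = -(x*z*y - x*(z*y)) := by
  have h1 := (halt (y+z) x).2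
  have h2 := (halt y x).2
  have h3 := (halt z x).2
  simp only [add_mul, mul_add] at h1
  linear_combination (norm := abel) h1 - h2 - h3

lemma p11_mul_p12 (halt : IsAlt R) {e a b : R} (ha : a ∈ P11 e) (hb : b ∈ P12 e) :
    a * b ∈ P12 e := by
  obtain ⟨ha1, ha2⟩ := ha
  obtain ⟨hb1, hb2⟩ := hb
  constructor
  · have h1 := alt_skew12 halt e a b
    rw [ha1, ha2, hb1] at h1
    linear_combination (norm := abel) -h1
  · have h2 := alt_skew23 halt a b e
    rw [hb2, ha2, hb1, mul_zero] at h2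
    linear_combination (norm := abel) h2

lemma p12_mul_p11 (halt : IsAlt R) {e b c : R} (hb : b ∈ P12 e) (hc : c ∈ P11 e) :
    b * c = 0 := by
  obtain ⟨hb1, hb2⟩ := hb
  obtain ⟨hc1, hc2⟩ := hc
  have s1 := alt_skew23 halt b c e
  have s2 := alt_skew12 halt c b e
  have s3 := alt_skew23 halt c b e
  rw [hb2, hc2, hc1, zero_mul] at s1
  rw [hb2, hc2, mul_zero] at s2
  rw [hb2, hc2, hb1, mul_zero] at s3
  linear_combination (norm := abel) -s1 + s2 - s3

lemma comm_P12 {e x : R} (hx : x ∈ P12 e) : x * (1 - e) - (1 - e) * x = x := by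
  obtain ⟨h1, h2⟩ := hx
  simp [mul_sub, sub_mul, h1, h2]

lemma comm_P21 {e x : R} (hx : x ∈ P21 e) : x * e - e * x = x := by
  rw [hx.2, hx.1, sub_zero]

lemma pn_two (x : Fin 2 → R) : pn 2 x = x 0 * x 1 - x 1 * x 0 := by
  show pn 1 _ * _ - _ * pn 1 _ = _
  simp [pn, Fin.last]

lemma pn_key (t : R) : ∀ (m : ℕ) (x : Fin (m+2) → R) (u : R),
    (∀ i : Fin (m+2), 2 ≤ (i : ℕ) → x i = t) → x 0 * x 1 - x 1 * x 0 = u →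
    u * t - t * u = u → pn (m+2) x = u := by
  intro m
  induction m with
  | zero =>
    intro x u htail h2 hut
    rw [pn_two, h2]
  | succ k ih =>
    intro x u htail h2 hut
    have hlast : x (Fin.last (k+2)) = t := htail _ (by simp [Fin.last])
    have hpn : pn (k+3) x =
        pn (k+2) (fun i => x i.castSucc) * x (Fin.last (k+2))
          - x (Fin.last (k+2)) * pn (k+2) (fun i => x i.castSucc) := rfl
    rw [hpn, hlast,
      ih (fun i => x i.castSucc) u (fun i hi => htail _ (by simpa using hi))
        (by simpa using h2) hut, hut]

lemma pn_congr : ∀ (m : ℕ) (x y : Fin (m+2) → R),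
    x 0 * x 1 - x 1 * x 0 = y 0 * y 1 - y 1 * y 0 →
    (∀ i : Fin (m+2), 2 ≤ (i : ℕ) → x i = y i) →
    pn (m+2) x = pn (m+2) y := by
  intro m
  induction m with
  | zero =>
    intro x y h2 htail
    rw [pn_two, pn_two, h2]
  | succ k ih =>
    intro x y h2 htail
    have hlast : x (Fin.last (k+2)) = y (Fin.last (k+2)) := htail _ (by simp [Fin.last])
    show pn (k+2) (fun i => x i.castSucc) * x (Fin.last (k+2))
          - x (Fin.last (k+2)) * pn (k+2) (fun i => x i.castSucc)
        = pn (k+2) (fun i => y i.castSucc) * y (Fin.last (k+2))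
          - y (Fin.last (k+2)) * pn (k+2) (fun i => y i.castSucc)
    rw [hlast, ih (fun i => x i.castSucc) (fun i => y i.castSucc)
      (by simpa using h2) (fun i hi => htail _ (by simpa using hi))]

lemma deriv_compare (m : ℕ) (D : R → R) (hD : IsMultLieNDeriv (m+2) D)
    (X Y : Fin (m+2) → R) (hXY : pn (m+2) X = pn (m+2) Y)
    (hagree : ∀ i : Fin m,
      pn (m+2) (Function.update X i.succ.succ (D (X i.succ.succ)))
        = pn (m+2) (Function.update Y i.succ.succ (D (Y i.succ.succ)))) :
    pn (m+2) (Function.update X 0 (D (X 0))) + pn (m+2) (Function.update X 1 (D (X 1)))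
      = pn (m+2) (Function.update Y 0 (D (Y 0))) + pn (m+2) (Function.update Y 1 (D (Y 1))) := by
  have h1 := hD X
  have h2 := hD Y
  rw [Fin.sum_univ_succ] at h1 h2
  rw [Fin.sum_univ_succ] at h1 h2
  simp only [Fin.succ_zero_eq_one] at h1 h2
  rw [hXY, h2] at h1
  have hsum : ∑ i : Fin m, pn (m+2) (Function.update X i.succ.succ (D (X i.succ.succ)))
      = ∑ i : Fin m, pn (m+2) (Function.update Y i.succ.succ (D (Y i.succ.succ))) :=
    Finset.sum_congr rfl fun i _ => hagree i
  rw [hsum] at h1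
  linear_combination (norm := abel) -h1

lemma part_core (m : ℕ) (D : R → R) (hD : IsMultLieNDeriv (m+2) D)
    (t a b c u : R)
    (Y : Fin (m+2) → R)
    (hYt : ∀ i : Fin (m+2), 2 ≤ (i : ℕ) → Y i = t)
    (hY2 : Y 0 * Y 1 - Y 1 * Y 0 = u)
    (hut : u * t - t * u = u)
    (hY01 : pn (m+2) (Function.update Y 0 (D (Y 0)))
        + pn (m+2) (Function.update Y 1 (D (Y 1))) = D u)
    (hab : a * b - b * a = u)
    (hDa : D a * b - b * D a = c * b)
    (hcb : (c*b) * t - t * (c*b) = c * b)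
    (haDb : a * D b - D b * a = a * D b)
    (haDbt : (a * D b) * t - t * (a * D b) = a * D b) :
    D u = c * b + a * D b := by
  set X : Fin (m+2) → R := fun i => if (i : ℕ) = 0 then a else if (i : ℕ) = 1 then b else t
    with hXdef
  have hX0 : X 0 = a := by simp [hXdef]
  have hX1 : X 1 = b := by simp [hXdef]
  have hXt : ∀ i : Fin (m+2), 2 ≤ (i : ℕ) → X i = t := by
    intro i hi
    simp only [hXdef]
    rw [if_neg (by omega), if_neg (by omega)]
  have hXY : pn (m+2) X = pn (m+2) Y := by
    rw [pn_key t m X u hXt (by rw [hX0, hX1, hab]) hut,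
        pn_key t m Y u hYt hY2 hut]
  have hagree : ∀ i : Fin m,
      pn (m+2) (Function.update X i.succ.succ (D (X i.succ.succ)))
        = pn (m+2) (Function.update Y i.succ.succ (D (Y i.succ.succ))) := by
    intro i
    have hv : ((i.succ.succ : Fin (m+2)) : ℕ) = (i : ℕ) + 2 := by
      simp [Fin.val_succ]
    have hk2 : 2 ≤ ((i.succ.succ : Fin (m+2)) : ℕ) := by omega
    have hk0 : (i.succ.succ : Fin (m+2)) ≠ 0 := by
      intro h; rw [h] at hk2; simp at hk2
    have hk1 : (i.succ.succ : Fin (m+2)) ≠ 1 := by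
      intro h; rw [h] at hk2; simp at hk2
    have hXk : X i.succ.succ = t := hXt _ hk2
    have hYk : Y i.succ.succ = t := hYt _ hk2
    apply pn_congr
    · rw [Function.update_of_ne hk0.symm, Function.update_of_ne hk0.symm,
        Function.update_of_ne (by simpa using hk1.symm),
        Function.update_of_ne (by simpa using hk1.symm),
        hX0, hX1, hab, hY2]
    · intro j hj
      by_cases hjk : j = i.succ.succ
      · subst hjk
        rw [Function.update_self, Function.update_self, hXk, hYk]
      · rw [Function.update_of_ne hjk, Function.update_of_ne hjk, hXt _ hj, hYt _ hj]
  have hcomp := deriv_compare m D hD X Y hXY hagree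
  have eX0 : pn (m+2) (Function.update X 0 (D (X 0))) = c * b := by
    rw [hX0]
    refine pn_key t m _ _ (fun i hi => ?_) ?_ hcb
    · have hi0 : i ≠ 0 := by intro h; rw [h] at hi; simp at hi
      rw [Function.update_of_ne hi0, hXt _ hi]
    · rw [Function.update_self, Function.update_of_ne one_ne_zero, hX1, hDa]
  have eX1 : pn (m+2) (Function.update X 1 (D (X 1))) = a * D b := by
    rw [hX1]
    refine pn_key t m _ _ (fun i hi => ?_) ?_ haDbt
    · have hi1 : i ≠ 1 := by intro h; rw [h] at hi; simp at hi
      rw [Function.update_of_ne hi1, hXt _ hi]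
    · rw [Function.update_self, Function.update_of_ne zero_ne_one, hX0, haDb]
  rw [eX0, eX1, hY01] at hcomp
  exact hcomp.symm

end Aux

theorem stmt14 {R : Type*} [NonAssocRing R] (halt : IsAlt R)
    (e₁ e₂ : R) (he₂ : e₂ = 1 - e₁)
    (he : e₁ * e₁ = e₁) (hne0 : e₁ ≠ 0) (hne1 : e₁ ≠ 1)
    (n : ℕ) (hn : 2 ≤ n)
    (htor : ∀ k ∈ ({2, 3, n - 1, n - 3} : Set ℕ), 1 ≤ k → ∀ x : R, k • x = 0 → x = 0)
    (hc1 : (∀ x ∈ P12 e₁, (∀ y ∈ P21 e₁, x * y = 0) → x = 0) ∧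
           (∀ x ∈ P21 e₁, (∀ y ∈ P12 e₁, x * y = 0) → x = 0))
    (hc2 : (∀ x ∈ P11 e₁, (∀ y ∈ P12 e₁, x * y = 0) → x = 0) ∧
           (∀ x ∈ P11 e₁, (∀ y ∈ P21 e₁, y * x = 0) → x = 0))
    (hc3 : (∀ x ∈ P22 e₁, (∀ y ∈ P12 e₁, y * x = 0) → x = 0) ∧
           (∀ x ∈ P22 e₁, (∀ y ∈ P21 e₁, x * y = 0) → x = 0))
    (hc4 : ∀ z ∈ rctr R, z ≠ 0 → ∀ r : R, ∃ s : R, z * s = r)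
    (D : R → R) (hD : IsMultLieNDeriv n D)
    (ha : ∀ a ∈ P11 e₁, ∃ z ∈ rctr R, (e₂ * D a) * e₂ = z * e₂)
    (hb : ∀ a ∈ P22 e₁, ∃ z ∈ rctr R, (e₁ * D a) * e₁ = z * e₁)
    (hcc : (∀ a ∈ P12 e₁, D a ∈ P12 e₁) ∧ (∀ a ∈ P21 e₁, D a ∈ P21 e₁))
    (hDe₁ : D e₁ ∈ rctr R)
    :
    (∀ a ∈ P11 e₁, ∀ b ∈ P12 e₁, ∀ c ∈ P11 e₁, D a - c ∈ rctr R →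
      D (a * b) = c * b + a * D b) ∧
    (∀ a ∈ P22 e₁, ∀ b ∈ P21 e₁, ∀ c ∈ P22 e₁, D a - c ∈ rctr R →
      D (a * b) = c * b + a * D b) := by
  obtain ⟨m, rfl⟩ : ∃ m, n = m + 2 := ⟨n - 2, by omega⟩
  have he₂e : e₂ * e₂ = e₂ := by
    rw [he₂]
    simp [mul_sub, sub_mul, he]
  have h1me₂ : (1 : R) - e₂ = e₁ := by rw [he₂]; abel
  -- membership conversions
  have m22 : ∀ x : R, x ∈ P22 e₁ → x ∈ P11 e₂ := by
    intro x ⟨h1, h2⟩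
    constructor <;> simp [he₂, sub_mul, mul_sub, h1, h2]
  have m21 : ∀ x : R, x ∈ P21 e₁ → x ∈ P12 e₂ := by
    intro x ⟨h1, h2⟩
    constructor <;> simp [he₂, sub_mul, mul_sub, h1, h2]
  have m12' : ∀ x : R, x ∈ P12 e₂ → x ∈ P21 e₁ := by
    intro x ⟨h1, h2⟩
    rw [he₂, mul_sub, mul_one, sub_eq_zero] at h2
    rw [he₂, sub_mul, one_mul] at h1
    constructor
    · linear_combination (norm := abel) -h1
    · exact h2.symm
  constructor
  · -- Part 1
    intro a ha11 b hb12 c hc11 hz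
    have hu12 : a * b ∈ P12 e₁ := p11_mul_p12 halt ha11 hb12
    have hDb12 : D b ∈ P12 e₁ := hcc.1 b hb12
    have hDu12 : D (a * b) ∈ P12 e₁ := hcc.1 _ hu12
    have hcb12 : c * b ∈ P12 e₁ := p11_mul_p12 halt hc11 hb12
    have haDb12 : a * D b ∈ P12 e₁ := p11_mul_p12 halt ha11 hDb12
    set u := a * b with hu
    set Y : Fin (m+2) → R :=
      fun i => if (i : ℕ) = 0 then e₁ else if (i : ℕ) = 1 then u else e₂ with hYdef
    have hY0 : Y 0 = e₁ := by simp [hYdef]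
    have hY1 : Y 1 = u := by simp [hYdef]
    have hYt : ∀ i : Fin (m+2), 2 ≤ (i : ℕ) → Y i = e₂ := by
      intro i hi
      simp only [hYdef]
      rw [if_neg (by omega), if_neg (by omega)]
    have hcmm : ∀ x : R, x ∈ P12 e₁ → x * e₂ - e₂ * x = x := by
      intro x hx
      rw [he₂]; exact comm_P12 hx
    refine part_core m D hD e₂ a b c u Y hYt ?_ (hcmm u hu12) ?_ ?_ ?_ (hcmm _ hcb12) ?_
      (hcmm _ haDb12)
    · rw [hY0, hY1, hu12.1, hu12.2, sub_zero]
    · -- hY01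
      have e0 : pn (m+2) (Function.update Y 0 (D (Y 0))) = 0 := by
        rw [hY0]
        refine pn_key e₂ m _ _ (fun i hi => ?_) ?_ (by simp)
        · have hi0 : i ≠ 0 := by intro h; rw [h] at hi; simp at hi
          rw [Function.update_of_ne hi0, hYt _ hi]
        · rw [Function.update_self, Function.update_of_ne one_ne_zero, hY1,
            hDe₁ u, sub_self]
      have e1 : pn (m+2) (Function.update Y 1 (D (Y 1))) = D u := by
        rw [hY1]
        refine pn_key e₂ m _ _ (fun i hi => ?_) ?_ (hcmm _ hDu12)
        · have hi1 : i ≠ 1 := by intro h; rw [h] at hi; simp at hi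
          rw [Function.update_of_ne hi1, hYt _ hi]
        · rw [Function.update_self, Function.update_of_ne zero_ne_one, hY0,
            hDu12.1, hDu12.2, sub_zero]
      rw [e0, e1, zero_add]
    · rw [p12_mul_p11 halt hb12 ha11, sub_zero, hu]
    · -- hDa
      have h := hz b
      rw [sub_mul, mul_sub, p12_mul_p11 halt hb12 hc11, sub_zero] at h
      linear_combination (norm := abel) h
    · rw [p12_mul_p11 halt hDb12 ha11, sub_zero]
  · -- Part 2
    intro a ha22 b hb21 c hc22 hz
    have ha11 : a ∈ P11 e₂ := m22 a ha22
    have hb12 : b ∈ P12 e₂ := m21 b hb21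
    have hc11 : c ∈ P11 e₂ := m22 c hc22
    have hu12 : a * b ∈ P12 e₂ := p11_mul_p12 halt ha11 hb12
    have hu21 : a * b ∈ P21 e₁ := m12' _ hu12
    have hDb21 : D b ∈ P21 e₁ := hcc.2 b hb21
    have hDb12 : D b ∈ P12 e₂ := m21 _ hDb21
    have hDu21 : D (a * b) ∈ P21 e₁ := hcc.2 _ hu21
    have hcb21 : c * b ∈ P21 e₁ := m12' _ (p11_mul_p12 halt hc11 hb12)
    have haDb21 : a * D b ∈ P21 e₁ := m12' _ (p11_mul_p12 halt ha11 hDb12)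
    set u := a * b with hu
    set Y : Fin (m+2) → R := fun i => if (i : ℕ) = 0 then u else e₁ with hYdef
    have hY0 : Y 0 = u := by simp [hYdef]
    have hY1 : Y 1 = e₁ := by simp [hYdef]
    have hYt : ∀ i : Fin (m+2), 2 ≤ (i : ℕ) → Y i = e₁ := by
      intro i hi
      simp only [hYdef]
      rw [if_neg (by omega)]
    refine part_core m D hD e₁ a b c u Y hYt ?_ (comm_P21 hu21) ?_ ?_ ?_
      (comm_P21 hcb21) ?_ (comm_P21 haDb21)
    · rw [hY0, hY1]; exact comm_P21 hu21
    · -- hY01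
      have e0 : pn (m+2) (Function.update Y 0 (D (Y 0))) = D u := by
        rw [hY0]
        refine pn_key e₁ m _ _ (fun i hi => ?_) ?_ (comm_P21 hDu21)
        · have hi0 : i ≠ 0 := by intro h; rw [h] at hi; simp at hi
          rw [Function.update_of_ne hi0, hYt _ hi]
        · rw [Function.update_self, Function.update_of_ne one_ne_zero, hY1]
          exact comm_P21 hDu21
      have e1 : pn (m+2) (Function.update Y 1 (D (Y 1))) = 0 := by
        rw [hY1]
        refine pn_key e₁ m _ _ (fun i hi => ?_) ?_ (by simp)
        · have hi1 : i ≠ 1 := by intro h; rw [h] at hi; simp at hi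
          rw [Function.update_of_ne hi1, hYt _ hi]
        · rw [Function.update_self, Function.update_of_ne zero_ne_one, hY0]
          rw [← hDe₁ u, sub_self]
      rw [e0, e1, add_zero]
    · rw [p12_mul_p11 halt hb12 ha11, sub_zero, hu]
    · -- hDa
      have h := hz b
      rw [sub_mul, mul_sub, p12_mul_p11 halt hb12 hc11, sub_zero] at h
      linear_combination (norm := abel) h
    · rw [p12_mul_p11 halt hDb12 ha11, sub_zero]
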